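/- In the random-amplification β-encoder, all iterates remain bounded: for every n ≥ 0 one has 0 ≤ x_n ≤ (β_max − 1)⁻¹. -/

import Mathlib

open MeasureTheory Filter Set Real

/-- Orbit of the random-amplification β-encoder: `rIter βs u x n` is the iterate `x_n`,
where `x_0 = x` and `x_n = βs_n · x_{n-1} − b_n`. -/
noncomputable def rIter (βs u : ℕ → ℝ) (x : ℝ) : ℕ → ℝ
  | 0 => x
  | n + 1 =>
      if βs (n + 1) * rIter βs u x n < u (n + 1) then βs (n + 1) * rIter βs u x n
      else βs (n + 1) * rIter βs u x n - 1

/-- The bit `b_n` produced by the random-amplification β-encoder at step `n ≥ 1`. -/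
noncomputable def rBit (βs u : ℕ → ℝ) (x : ℝ) (n : ℕ) : ℝ :=
  if βs n * rIter βs u x (n - 1) < u n then 0 else 1

/-- in the random-amplification β-encoder all iterates remain bounded:
for every `n ≥ 0` one has `0 ≤ x_n ≤ (β_max − 1)⁻¹`. -/
theorem stmt_11 (βmin βmax : ℝ) (h1 : 1 < βmin) (h2 : βmin ≤ βmax) (h3 : βmax < 2)
    (βs u : ℕ → ℝ)
    (hβs : ∀ n, 1 ≤ n → βs n ∈ Set.Icc βmin βmax)
    (hu : ∀ n, 1 ≤ n → u n ∈ Set.Icc (1:ℝ) (βmax - 1)⁻¹)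
    (x : ℝ) (hx : x ∈ Set.Icc (0:ℝ) 1) :
    ∀ n : ℕ, 0 ≤ rIter βs u x n ∧ rIter βs u x n ≤ (βmax - 1)⁻¹ := by

  have hb1 : (0:ℝ) < βmax - 1 := by linarith
  have hb2 : βmax - 1 < 1 := by linarith
  have hk1 : (1:ℝ) ≤ (βmax - 1)⁻¹ := by
    rw [le_inv_comm₀ one_pos hb1]; linarith
  intro n
  induction n with
  | zero =>
    exact ⟨hx.1, hx.2.trans hk1⟩
  | succ n ih =>
    obtain ⟨ih0, ih1⟩ := ih
    have hβ := hβs (n+1) (by omega)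
    have hun := hu (n+1) (by omega)
    have hβ0 : (0:ℝ) < βs (n+1) := by have := hβ.1; linarith
    have hkey : βmax * (βmax - 1)⁻¹ - 1 = (βmax - 1)⁻¹ := by
      field_simp
      ring
    have hup : βs (n+1) * rIter βs u x n ≤ βmax * (βmax - 1)⁻¹ :=
      mul_le_mul hβ.2 ih1 ih0 (by linarith)
    show 0 ≤ rIter βs u x (n+1) ∧ rIter βs u x (n+1) ≤ (βmax - 1)⁻¹
    rw [rIter]
    split_ifs with h
    · constructor
      · positivity
      · exact h.le.trans hun.2
    · push_neg at h
      constructor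
      · have := hun.1; linarith
      · linarith [hkey]
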